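/- If A is a ring, S an endomorphism of A, D an S-derivation, and for every a, b ∈ A there exist c, d ∈ A with (t−c)(t−a) = (t−d)(t−b) in R = A[t;S,D], then for every finite set {a₁,…,aₙ} ⊆ A there exists a monic polynomial of degree n lying in ∩_{i=1}^n R·(t − aᵢ). -/

import Mathlib

lemma aux_coeffs {A R : Type*} [Ring A] [Ring R]
    (S : A →+* A) (D : A →+ A) (ι : A →+* R) (t : R)
    (hcomm : ∀ x : A, t * ι x = ι (S x) * t + ι (D x)) :
    ∀ l : List A, ∃ e : ℕ → A, (∀ i, l.length < i → e i = 0) ∧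
    e l.length = 1 ∧
    (l.map (fun d => t - ι d)).prod = ∑ i ∈ Finset.range (l.length + 1), ι (e i) * t ^ i := by
  intro l
  induction l with
  | nil =>
    refine ⟨fun i => if i = 0 then 1 else 0, ?_, ?_, ?_⟩
    · intro i hi; simp only [if_neg (by omega : ¬ i = 0)]
    · simp
    · simp
  | cons d l ih =>
    obtain ⟨e, he0, heL, heq⟩ := ih
    set n := l.length with hn
    refine ⟨fun i => (if i = 0 then 0 else S (e (i-1))) + (D (e i) - d * e i), ?_, ?_, ?_⟩
    · intro i hi
      simp only [List.length_cons] at hi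
      have h1 : e i = 0 := he0 i (by omega)
      have h2 : e (i-1) = 0 := he0 (i-1) (by omega)
      have : i ≠ 0 := by omega
      simp [this, h1, h2]
    · simp only [List.length_cons]
      have h1 : e (n+1) = 0 := he0 _ (by omega)
      simp [← hn, heL, h1]
    · simp only [List.map_cons, List.prod_cons, List.length_cons, heq]
      rw [sub_mul, Finset.mul_sum]
      have key : ∀ i, t * (ι (e i) * t ^ i) = ι (S (e i)) * t ^ (i+1) + ι (D (e i)) * t ^ i := by
        intro i
        rw [← mul_assoc, hcomm, add_mul, mul_assoc, pow_succ']
      simp_rw [key]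
      rw [Finset.sum_add_distrib]
      have hRHS : ∀ i ∈ Finset.range (n+1+1),
          ι ((if i = 0 then 0 else S (e (i-1))) + (D (e i) - d * e i)) * t ^ i
          = (if i = 0 then 0 else ι (S (e (i-1))) * t ^ i)
            + (ι (D (e i)) * t ^ i - ι (d * e i) * t ^ i) := by
        intro i _
        rw [map_add, map_sub, add_mul, sub_mul]
        congr 1
        split <;> simp
      rw [Finset.sum_congr rfl hRHS, Finset.sum_add_distrib]
      have hz : e (n+1) = 0 := he0 _ (by omega)
      rw [Finset.sum_range_succ' (fun i => if i = 0 then 0 else ι (S (e (i-1))) * t ^ i) (n+1),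
        Finset.sum_range_succ (fun i => ι (D (e i)) * t ^ i - ι (d * e i) * t ^ i) (n+1),
        Finset.sum_sub_distrib, Finset.mul_sum]
      simp [hz, mul_assoc]
      abel

lemma aux_swap {A R : Type*} [Ring A] [Ring R]
    (ι : A →+* R) (t : R)
    (H : ∀ a b : A, ∃ c d : A, (t - ι c) * (t - ι a) = (t - ι d) * (t - ι b)) :
    ∀ (l : List A) (b : A), ∃ c : A, ∃ q : R,
      (t - ι c) * (l.map (fun d => t - ι d)).prod = q * (t - ι b) := by
  intro l
  induction l with
  | nil => intro b; exact ⟨b, 1, by simp⟩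
  | cons d l ih =>
    intro b
    obtain ⟨c', q', hq'⟩ := ih b
    obtain ⟨c, e, hce⟩ := H d c'
    refine ⟨c, (t - ι e) * q', ?_⟩
    simp only [List.map_cons, List.prod_cons]
    rw [← mul_assoc, hce, mul_assoc, hq', ← mul_assoc]

lemma aux_list {A R : Type*} [Ring A] [Ring R]
    (ι : A →+* R) (t : R)
    (H : ∀ a b : A, ∃ c d : A, (t - ι c) * (t - ι a) = (t - ι d) * (t - ι b)) :
    ∀ as : List A, ∃ l : List A, l.length = as.length ∧
      ∀ b ∈ as, ∃ q : R, (l.map (fun d => t - ι d)).prod = q * (t - ι b) := by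
  intro as
  induction as with
  | nil => exact ⟨[], rfl, by simp⟩
  | cons b as ih =>
    obtain ⟨l, hlen, hl⟩ := ih
    obtain ⟨c, q, hq⟩ := aux_swap ι t H l b
    refine ⟨c :: l, by simp [hlen], ?_⟩
    intro b' hb'
    rcases List.mem_cons.mp hb' with h | h
    · subst h; exact ⟨q, by simpa using hq⟩
    · obtain ⟨q', hq'⟩ := hl b' h
      refine ⟨(t - ι c) * q', ?_⟩
      simp only [List.map_cons, List.prod_cons, hq', mul_assoc]

/-- If in `R = A[t;S,D]` (here: any ring `R` with `ι : A →+* R` and `t` satisfying the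
commutation rule `t·a = S(a)t + D(a)`) every pair `a, b` admits `c, d` with
`(t−c)(t−a) = (t−d)(t−b)`, then for every `a₁,…,aₙ` there is a monic polynomial of
degree `n` in `∩ᵢ R·(t − aᵢ)`. -/
theorem monic_common_left_multiple {A R : Type*} [Ring A] [Ring R]
    (S : A →+* A) (D : A →+ A)
    (hD : ∀ x y : A, D (x * y) = S x * D y + D x * y)
    (ι : A →+* R) (t : R)
    (hcomm : ∀ x : A, t * ι x = ι (S x) * t + ι (D x))
    (H : ∀ a b : A, ∃ c d : A, (t - ι c) * (t - ι a) = (t - ι d) * (t - ι b))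
    (n : ℕ) (a : Fin n → A) :
    ∃ e : Fin n → A,
      (t ^ n + ∑ i : Fin n, ι (e i) * t ^ (i : ℕ)) ∈
        ⨅ i : Fin n, Ideal.span {t - ι (a i)} := by
  obtain ⟨l, hlen, hl⟩ := aux_list ι t H (List.ofFn a)
  have hlen' : l.length = n := by simpa using hlen
  obtain ⟨e, he0, heL, heq⟩ := aux_coeffs S D ι t hcomm l
  rw [hlen'] at heL heq
  refine ⟨fun i => e i, ?_⟩
  have hform : t ^ n + ∑ i : Fin n, ι (e (i : ℕ)) * t ^ (i : ℕ)
      = (l.map (fun d => t - ι d)).prod := by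
    rw [heq, Finset.sum_range_succ, heL, map_one, one_mul,
      Fin.sum_univ_eq_sum_range (fun i => ι (e i) * t ^ i)]
    exact (add_comm _ _)
  rw [hform, Ideal.mem_iInf]
  intro i
  obtain ⟨q, hq⟩ := hl (a i) (List.mem_ofFn.mpr ⟨i, rfl⟩)
  rw [Ideal.span, Submodule.mem_span_singleton]
  exact ⟨q, by simpa [smul_eq_mul] using hq.symm⟩
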